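/- Suppose {x, y} is a separating set of a graph G and H is a connected component of G − {x, y}. If H contains no common neighbor of x and y, then G has no locally connected spanning tree. -/

import Mathlib

/-- `T` is a locally connected spanning tree of `G`. -/
def IsLCST {V : Type*} (G T : SimpleGraph V) : Prop :=
  T ≤ G ∧ T.Connected ∧ T.IsAcyclic ∧
    ∀ v : V, (G.induce (T.neighborSet v)).Connected

private lemma find_cross {W : Type*} {H : SimpleGraph W} (Q : W → Prop) {a b : W}
    (w : H.Walk a b) (ha : Q a) (hb : ¬ Q b) :
    ∃ p q, Q p ∧ ¬ Q q ∧ H.Adj p q := by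
  induction w with
  | nil => exact absurd ha hb
  | @cons u v w hadj p ih =>
    by_cases hm : Q v
    · exact ih hm hb
    · exact ⟨u, v, ha, hm, hadj⟩

private lemma closed_aux {W : Type*} {T : SimpleGraph W} {A : Set W}
    (h : ∀ v ∈ A, ∀ u, T.Adj v u → u ∈ A) {a b : W} (hr : T.Reachable a b)
    (ha : a ∈ A) : b ∈ A := by
  obtain ⟨w⟩ := hr
  induction w with
  | nil => exact ha
  | @cons u v w hadj p ih => exact ih (h u ha v hadj)

theorem no_lcst_of_component_without_common_neighbor {V : Type*} [Fintype V]
    (G : SimpleGraph V) (x y : V) (hxy : x ≠ y)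
    (hsep : ¬ (G.induce (({x, y} : Set V)ᶜ)).Preconnected)
    (C : (G.induce (({x, y} : Set V)ᶜ)).ConnectedComponent)
    (hno : ∀ z : (({x, y} : Set V)ᶜ : Set V),
      (G.induce (({x, y} : Set V)ᶜ)).connectedComponentMk z = C →
        ¬ (G.Adj x ↑z ∧ G.Adj y ↑z)) :
    ¬ ∃ T, IsLCST G T := by
  rintro ⟨T, hle, hTconn, -, hloc⟩
  let K : Set V := ({x, y} : Set V)ᶜ
  let P : Set V := {v | ∃ h : v ∈ K, (G.induce K).connectedComponentMk ⟨v, h⟩ = C}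
  have hxK : x ∉ K := by simp [K]
  have hyK : y ∉ K := by simp [K]
  have hxP : x ∉ P := fun ⟨h, _⟩ => hxK h
  have hyP : y ∉ P := fun ⟨h, _⟩ => hyK h
  -- F1 : edges from P stay in P ∪ {x, y}
  have F1 : ∀ v ∈ P, ∀ u, G.Adj v u → u = x ∨ u = y ∨ u ∈ P := by
    intro v hv u hadj
    by_cases hux : u = x
    · exact Or.inl hux
    by_cases huy : u = y
    · exact Or.inr (Or.inl huy)
    have huK : u ∈ K := by simp [K, hux, huy]
    obtain ⟨hvK, hvC⟩ := hv
    refine Or.inr (Or.inr ⟨huK, ?_⟩)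
    rw [← hvC]
    exact SimpleGraph.ConnectedComponent.sound
      (SimpleGraph.Adj.reachable (by exact hadj.symm))
  -- F2 : no common neighbor in P
  have F2 : ∀ v ∈ P, ¬ (G.Adj x v ∧ G.Adj y v) := by
    rintro v ⟨hvK, hvC⟩
    exact hno ⟨v, hvK⟩ hvC
  -- some vertex c in P
  obtain ⟨z, hz⟩ := C.exists_rep
  have hcP : (z : V) ∈ P := ⟨z.2, by rwa [Subtype.eta]⟩
  -- some vertex w outside P ∪ {x, y}
  have hw : ∃ w : V, w ∉ P ∧ w ≠ x ∧ w ≠ y := by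
    rw [SimpleGraph.Preconnected] at hsep
    push_neg at hsep
    obtain ⟨a, b, hab⟩ := hsep
    have hne : (G.induce K).connectedComponentMk a ≠ (G.induce K).connectedComponentMk b :=
      fun h => hab (SimpleGraph.ConnectedComponent.exact h)
    by_cases h : (G.induce K).connectedComponentMk a = C
    · refine ⟨b, ?_, ?_, ?_⟩
      · rintro ⟨hbK, hbC⟩
        rw [Subtype.eta] at hbC
        exact hne (h.trans hbC.symm)
      · intro hbx; exact hxK (hbx ▸ b.2)
      · intro hby; exact hyK (hby ▸ b.2)
    · refine ⟨a, ?_, ?_, ?_⟩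
      · rintro ⟨haK, haC⟩
        rw [Subtype.eta] at haC
        exact h haC
      · intro hax; exact hxK (hax ▸ a.2)
      · intro hay; exact hyK (hay ▸ a.2)
  obtain ⟨w, hwP, hwx, hwy⟩ := hw
  have hreach : ∀ a b : V, T.Reachable a b := hTconn.preconnected
  -- the apex lemma
  have apex : ∀ x' y' : V, (∀ v ∈ P, ∀ u, G.Adj v u → u = x' ∨ u = y' ∨ u ∈ P) →
      (∀ v ∈ P, ¬ (G.Adj x' v ∧ G.Adj y' v)) →
      (G.induce (T.neighborSet x')).Connected →
      (∃ u ∈ T.neighborSet x', u ∈ P) → ∀ s ∈ T.neighborSet x', s ∈ P := by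
    intro x' y' hF1 hF2 hcon ⟨u, hu, huP⟩ s hs
    by_contra hsP
    obtain ⟨wlk⟩ := hcon.preconnected ⟨u, hu⟩ ⟨s, hs⟩
    obtain ⟨p, q, hpP, hqP, hpq⟩ :=
      find_cross (fun v : T.neighborSet x' => (v : V) ∈ P) wlk huP hsP
    have hGpq : G.Adj (p : V) (q : V) := hpq
    have hGxp : G.Adj x' (p : V) := hle p.2
    rcases hF1 (p : V) hpP (q : V) hGpq with h | h | h
    · have hGxq : G.Adj x' (q : V) := hle q.2
      rw [h] at hGxq
      exact G.loopless.irrefl x' hGxq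
    · have : G.Adj (p : V) y' := by rwa [h] at hGpq
      exact hF2 (p : V) hpP ⟨hGxp, this.symm⟩
    · exact hqP h
  by_cases hx : ∃ u ∈ T.neighborSet x, u ∈ P
  · have hNx : ∀ s ∈ T.neighborSet x, s ∈ P := apex x y F1 F2 (hloc x) hx
    by_cases hy : ∃ u ∈ T.neighborSet y, u ∈ P
    · have hNy : ∀ s ∈ T.neighborSet y, s ∈ P :=
        apex y x (fun v hv u hadj => by rcases F1 v hv u hadj with h | h | h <;> tauto)
          (fun v hv ⟨h1, h2⟩ => F2 v hv ⟨h2, h1⟩) (hloc y) hy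
      have hclosed : ∀ v ∈ {v | v ∈ P ∨ v = x ∨ v = y}, ∀ u, T.Adj v u →
          u ∈ {v | v ∈ P ∨ v = x ∨ v = y} := by
        rintro v (hv | rfl | rfl) u hadj
        · rcases F1 v hv u (hle hadj) with h | h | h <;> tauto
        · exact Or.inl (hNx u hadj)
        · exact Or.inl (hNy u hadj)
      have := closed_aux hclosed (hreach _ w) (Or.inl hcP)
      rcases this with h | h | h
      · exact hwP h
      · exact hwx h
      · exact hwy h
    · push_neg at hy
      have hclosed : ∀ v ∈ {v | v ∈ P ∨ v = x}, ∀ u, T.Adj v u →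
          u ∈ {v | v ∈ P ∨ v = x} := by
        rintro v (hv | rfl) u hadj
        · rcases F1 v hv u (hle hadj) with h | h | h
          · exact Or.inr h
          · exact absurd hv (by subst h; exact hy v hadj.symm)
          · exact Or.inl h
        · exact Or.inl (hNx u hadj)
      have := closed_aux hclosed (hreach _ y) (Or.inl hcP)
      rcases this with h | h
      · exact hyP h
      · exact hxy h.symm
  · push_neg at hx
    by_cases hy : ∃ u ∈ T.neighborSet y, u ∈ P
    · have hNy : ∀ s ∈ T.neighborSet y, s ∈ P :=
        apex y x (fun v hv u hadj => by rcases F1 v hv u hadj with h | h | h <;> tauto)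
          (fun v hv ⟨h1, h2⟩ => F2 v hv ⟨h2, h1⟩) (hloc y) hy
      have hclosed : ∀ v ∈ {v | v ∈ P ∨ v = y}, ∀ u, T.Adj v u →
          u ∈ {v | v ∈ P ∨ v = y} := by
        rintro v (hv | rfl) u hadj
        · rcases F1 v hv u (hle hadj) with h | h | h
          · exact absurd hv (by subst h; exact hx v hadj.symm)
          · exact Or.inr h
          · exact Or.inl h
        · exact Or.inl (hNy u hadj)
      have := closed_aux hclosed (hreach _ x) (Or.inl hcP)
      rcases this with h | h
      · exact hxP h
      · exact hxy h
    · push_neg at hy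
      have hclosed : ∀ v ∈ P, ∀ u, T.Adj v u → u ∈ P := by
        intro v hv u hadj
        rcases F1 v hv u (hle hadj) with h | h | h
        · exact absurd hv (by subst h; exact hx v hadj.symm)
        · exact absurd hv (by subst h; exact hy v hadj.symm)
        · exact h
      exact hxP (closed_aux hclosed (hreach _ x) hcP)
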